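/- arXiv:1510.02331 — 3 statements merged into one kernel-verified Lean document; each statement's English description precedes it below -/
import Mathlib

section
/- Let K ⊆ ℝⁿ be a convex body and let δ ∈ ℝ be such that every translative packing of K has upper density at most δ. Then every translative packing of the convex body ½(K − K) has upper density at most δ · vol(½(K − K)) / vol(K). -/
open MeasureTheory Filter Metric Pointwise

/-- A translative packing of `K`: a set of translation vectors such that the translates
of the interior of `K` are pairwise disjoint. -/
def IsTranslativePacking {n : ℕ} (K X : Set (EuclideanSpace ℝ (Fin n))) : Prop :=
  ∀ x ∈ X, ∀ y ∈ X, x ≠ y →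
    Disjoint ((fun z => x + z) '' interior K) ((fun z => y + z) '' interior K)

/-- The upper density of a translative packing `X` of the body `K`. -/
noncomputable def packingUpperDensity {n : ℕ} (K X : Set (EuclideanSpace ℝ (Fin n))) : ℝ :=
  Filter.limsup (fun r : ℝ => ⨆ c : EuclideanSpace ℝ (Fin n),
    (volume (closedBall c r ∩ ⋃ x ∈ X, (fun z => x + z) '' K) /
      volume (closedBall c r)).toReal) Filter.atTop

open Topology

lemma disj_translates_iff {V : Type*} [AddCommGroup V] (A : Set V) (x y : V) :
    Disjoint ((fun z => x + z) '' A) ((fun z => y + z) '' A) ↔ y - x ∉ A - A := by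
  constructor
  · intro h hmem
    obtain ⟨a, ha, b, hb, hab⟩ := Set.mem_sub.1 hmem
    rw [sub_eq_sub_iff_add_eq_add] at hab
    exact Set.disjoint_left.1 h ⟨a, ha, rfl⟩ ⟨b, hb, by simp only []; rw [← hab, add_comm a x]⟩
  · intro h
    rw [Set.disjoint_left]
    rintro p ⟨a, ha, rfl⟩ ⟨b, hb, hba⟩
    refine h (Set.mem_sub.2 ⟨a, ha, b, hb, ?_⟩)
    rw [sub_eq_sub_iff_add_eq_add, add_comm a x]
    exact hba.symm

lemma interior_sub_self' {E : Type*} [NormedAddCommGroup E] [NormedSpace ℝ E]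
    (K : Set E) (hKconv : Convex ℝ K) (hKint : (interior K).Nonempty) :
    interior (K - K) = interior K - interior K := by
  refine subset_antisymm ?_
    (interior_maximal (Set.sub_subset_sub interior_subset interior_subset)
      (isOpen_interior.sub_right))
  intro z hz
  obtain ⟨a₀, ha₀⟩ := hKint
  obtain ⟨ε, hε, hball⟩ := Metric.mem_nhds_iff.1 (mem_interior_iff_mem_nhds.1 hz)
  set t : ℝ := ε / (2 * (‖z‖ + 1)) with ht
  have hz1 : (0:ℝ) < ‖z‖ + 1 := by positivity
  have htpos : 0 < t := by positivity
  have h1t : (0:ℝ) < 1 + t := by linarith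
  have hz' : (1 + t) • z ∈ K - K := by
    apply hball
    rw [Metric.mem_ball, dist_eq_norm]
    have e : (1 + t) • z - z = t • z := by module
    rw [e, norm_smul, Real.norm_eq_abs, abs_of_pos htpos]
    calc t * ‖z‖ ≤ t * (‖z‖ + 1) := by nlinarith
      _ = ε / 2 := by rw [ht]; field_simp
      _ < ε := by linarith
  obtain ⟨a, haK, b, hbK, hab⟩ := Set.mem_sub.1 hz'
  have hc0 : (0:ℝ) ≤ (1 + t)⁻¹ := by positivity
  have hd0 : (0:ℝ) < t * (1 + t)⁻¹ := by positivity
  have hcd : (1 + t)⁻¹ + t * (1 + t)⁻¹ = 1 := by field_simp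
  refine Set.mem_sub.2 ⟨(1 + t)⁻¹ • a + (t * (1 + t)⁻¹) • a₀,
    hKconv.combo_closure_interior_mem_interior (subset_closure haK) ha₀ hc0 hd0 hcd,
    (1 + t)⁻¹ • b + (t * (1 + t)⁻¹) • a₀,
    hKconv.combo_closure_interior_mem_interior (subset_closure hbK) ha₀ hc0 hd0 hcd, ?_⟩
  have e1 : ((1 + t)⁻¹ • a + (t * (1 + t)⁻¹) • a₀) - ((1 + t)⁻¹ • b + (t * (1 + t)⁻¹) • a₀)
      = (1 + t)⁻¹ • (a - b) := by module
  rw [e1, hab, smul_smul, inv_mul_cancel₀ h1t.ne', one_smul]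

lemma half_diff_interior {E : Type*} [NormedAddCommGroup E] [NormedSpace ℝ E]
    (K L : Set E) (hKconv : Convex ℝ K)
    (hIK : interior (K - K) = interior K - interior K)
    (hL : L = (2⁻¹ : ℝ) • (K - K)) :
    interior L - interior L = interior K - interior K := by
  have h2 : ((2:ℝ)⁻¹) ≠ 0 := by norm_num
  have hLint : interior L = (2⁻¹ : ℝ) • (interior K - interior K) := by
    rw [hL, interior_smul₀ h2, hIK]
  set I := interior K - interior K with hI
  have hIconv : Convex ℝ I := hKconv.interior.sub hKconv.interior
  have hIsym : ∀ u ∈ I, -u ∈ I := by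
    rintro u hu
    obtain ⟨p, hp, q, hq, rfl⟩ := Set.mem_sub.1 hu
    exact Set.mem_sub.2 ⟨q, hq, p, hp, by abel⟩
  rw [hLint]
  ext z
  constructor
  · rintro ⟨p, hp, q, hq, rfl⟩
    obtain ⟨p', hp', rfl⟩ := hp
    obtain ⟨q', hq', rfl⟩ := hq
    show (2⁻¹:ℝ) • p' - (2⁻¹:ℝ) • q' ∈ I
    have e : (2⁻¹:ℝ) • p' - (2⁻¹:ℝ) • q' = (2⁻¹:ℝ) • p' + (2⁻¹:ℝ) • (-q') := by module
    rw [e]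
    exact hIconv hp' (hIsym _ hq') (by norm_num) (by norm_num) (by norm_num)
  · intro hz
    exact Set.mem_sub.2 ⟨(2⁻¹:ℝ) • z, Set.smul_mem_smul_set hz,
      (2⁻¹:ℝ) • (-z), Set.smul_mem_smul_set (hIsym _ hz), by module⟩

/-- A density upper bound `δ` for translative packings of `K` yields the upper bound
`δ · vol(½(K − K)) / vol(K)` for translative packings of `½(K − K)`. -/
theorem difference_body_density_bound {n : ℕ} (K : Set (EuclideanSpace ℝ (Fin n)))
    (hKc : IsCompact K) (hKconv : Convex ℝ K) (hKint : (interior K).Nonempty)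
    (δ : ℝ)
    (hδ : ∀ X : Set (EuclideanSpace ℝ (Fin n)),
      IsTranslativePacking K X → packingUpperDensity K X ≤ δ)
    (L : Set (EuclideanSpace ℝ (Fin n))) (hL : L = (2⁻¹ : ℝ) • (K - K)) :
    ∀ X : Set (EuclideanSpace ℝ (Fin n)), IsTranslativePacking L X →
      packingUpperDensity L X ≤ δ * (volume L).toReal / (volume K).toReal := by
  intro X hXL
  have hIK : interior (K - K) = interior K - interior K :=
    interior_sub_self' K hKconv hKint
  have hdiff : interior L - interior L = interior K - interior K :=
    half_diff_interior K L hKconv hIK hL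
  -- X is a packing of K
  have hXK : IsTranslativePacking K X := by
    intro x hx y hy hxy
    have h := hXL x hx y hy hxy
    rw [disj_translates_iff] at h ⊢
    rwa [hdiff] at h
  -- interior L nonempty
  have hLint : (interior L).Nonempty := by
    obtain ⟨a₀, ha₀⟩ := hKint
    have : (0 : EuclideanSpace ℝ (Fin n)) ∈ interior L := by
      rw [hL, interior_smul₀ (by norm_num : ((2:ℝ)⁻¹) ≠ 0), hIK]
      exact ⟨(0:EuclideanSpace ℝ (Fin n)), Set.mem_sub.2 ⟨a₀, ha₀, a₀, ha₀, by abel⟩, by simp⟩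
    exact ⟨0, this⟩
  -- X is countable
  have hXcnt : X.Countable := by
    refine Set.PairwiseDisjoint.countable_of_isOpen
      (s := fun x : EuclideanSpace ℝ (Fin n) => (fun z => x + z) '' interior L) (fun x hx y hy hxy => hXL x hx y hy hxy)
      (fun x _ => (isOpenMap_add_left x) _ isOpen_interior) (fun x _ => hLint.image _)
  -- bounding radius
  obtain ⟨r₁, hKr₁⟩ := hKc.isBounded.subset_closedBall 0
  set R₀ : ℝ := max r₁ 0 with hR₀def
  have hR₀ : 0 ≤ R₀ := le_max_right _ _
  have hKR : K ⊆ closedBall 0 R₀ :=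
    hKr₁.trans (closedBall_subset_closedBall (le_max_left _ _))
  have hLR : L ⊆ closedBall 0 R₀ := by
    rw [hL]
    rintro _ ⟨p, hp, rfl⟩
    obtain ⟨a, ha, b, hb, rfl⟩ := Set.mem_sub.1 hp
    have hna : ‖a‖ ≤ R₀ := mem_closedBall_zero_iff.1 (hKR ha)
    have hnb : ‖b‖ ≤ R₀ := mem_closedBall_zero_iff.1 (hKR hb)
    rw [mem_closedBall_zero_iff, norm_smul, Real.norm_eq_abs]
    have : ‖a - b‖ ≤ ‖a‖ + ‖b‖ := norm_sub_le _ _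
    rw [abs_of_pos (by norm_num : (0:ℝ) < (2:ℝ)⁻¹)]
    nlinarith
  obtain ⟨R, hRdef, hR⟩ : ∃ R : ℝ, R = R₀ + R₀ ∧ 0 ≤ R := ⟨R₀ + R₀, rfl, by positivity⟩
  -- translation invariance of volume
  have himg : ∀ (x : EuclideanSpace ℝ (Fin n)) (S : Set (EuclideanSpace ℝ (Fin n))), volume ((fun z => x + z) '' S) = volume S := by
    intro x S
    have h' : (fun z => x + z) = (fun z => x +ᵥ z) := funext fun z => rfl
    rw [h', Set.image_vadd, measure_vadd]
  -- volume of interior K equals volume of K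
  have hKvol : volume (interior K) = volume K := by
    refine le_antisymm (measure_mono interior_subset) ?_
    have hsub : K ⊆ interior K ∪ frontier K := by
      intro p hp
      by_cases h : p ∈ interior K
      · exact Or.inl h
      · exact Or.inr ⟨subset_closure hp, h⟩
    calc volume K ≤ volume (interior K ∪ frontier K) := measure_mono hsub
      _ ≤ volume (interior K) + volume (frontier K) := measure_union_le _ _
      _ = volume (interior K) := by rw [hKconv.addHaar_frontier volume, add_zero]
  -- the sets
  rw [packingUpperDensity]
  set UL := ⋃ x ∈ X, (fun z => x + z) '' L with hUL
  set UK := ⋃ x ∈ X, (fun z => x + z) '' K with hUK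
  -- finiteness and positivity of volumes
  have hVfin : volume K ≠ ⊤ := hKc.measure_lt_top.ne
  have hWfin : volume L ≠ ⊤ :=
    ((measure_mono hLR).trans_lt measure_closedBall_lt_top).ne
  have hVpos : 0 < (volume K).toReal := by
    refine ENNReal.toReal_pos ?_ hVfin
    exact (lt_of_lt_of_le (isOpen_interior.measure_pos volume hKint)
      (measure_mono interior_subset)).ne'
  set v := (volume K).toReal with hv
  set w := (volume L).toReal with hw
  have hw0 : 0 ≤ w := ENNReal.toReal_nonneg
  -- THE KEY INEQUALITY
  have key : ∀ (c : EuclideanSpace ℝ (Fin n)) (r : ℝ), 0 ≤ r →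
      volume (closedBall c r ∩ UL) * volume K ≤ volume L * volume (closedBall c (r + R) ∩ UK) := by
    intro c r hr
    set S := {x ∈ X | (((fun z => x + z) '' L) ∩ closedBall c r).Nonempty} with hS
    have hSX : S ⊆ X := fun x hx => hx.1
    have hScnt : S.Countable := hXcnt.mono hSX
    have hsub1 : closedBall c r ∩ UL ⊆ ⋃ x ∈ S, (fun z => x + z) '' L := by
      rintro p ⟨hp1, hp2⟩
      rw [hUL] at hp2
      simp only [Set.mem_iUnion] at hp2 ⊢
      obtain ⟨x, hxX, hpx⟩ := hp2
      exact ⟨x, ⟨hxX, ⟨p, hpx, hp1⟩⟩, hpx⟩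
    have h1 : volume (closedBall c r ∩ UL) ≤ ∑' (_ : S), volume L := by
      refine (measure_mono hsub1).trans ((measure_biUnion_le volume hScnt _).trans ?_)
      refine le_of_eq (tsum_congr fun x => himg _ _)
    have hdisj : S.PairwiseDisjoint (fun x : EuclideanSpace ℝ (Fin n) => (fun z => x + z) '' interior K) :=
      fun x hx y hy hxy => hXK x (hSX hx) y (hSX hy) hxy
    have hmeas : ∀ x ∈ S, MeasurableSet ((fun z => x + z) '' interior K) :=
      fun x _ => ((isOpenMap_add_left x) _ isOpen_interior).measurableSet
    have h2 : ∑' (_ : S), volume K = volume (⋃ x ∈ S, (fun z => x + z) '' interior K) := by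
      rw [measure_biUnion hScnt hdisj hmeas]
      refine (tsum_congr fun x => ?_).symm
      rw [himg, hKvol]
    have hsub2 : (⋃ x ∈ S, (fun z => x + z) '' interior K) ⊆ closedBall c (r + R) ∩ UK := by
      intro p hp
      simp only [Set.mem_iUnion] at hp
      obtain ⟨x, hxS, k, hk, rfl⟩ := hp
      constructor
      · obtain ⟨q, ⟨l, hl, rfl⟩, hq⟩ := hxS.2
        have hnk : ‖k‖ ≤ R₀ := mem_closedBall_zero_iff.1 (hKR (interior_subset hk))
        have hnl : ‖l‖ ≤ R₀ := mem_closedBall_zero_iff.1 (hLR hl)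
        have hql : dist (x + l) c ≤ r := mem_closedBall.1 hq
        have h1 : dist (x + k) (x + l) = dist k l := dist_add_left _ _ _
        have h2 : dist k l ≤ ‖k‖ + ‖l‖ := by
          rw [dist_eq_norm]; exact (norm_sub_le _ _)
        rw [mem_closedBall]
        calc dist ((fun z => x + z) k) c ≤ dist (x + k) (x + l) + dist (x + l) c :=
              dist_triangle _ _ _
          _ ≤ (‖k‖ + ‖l‖) + r := by rw [h1]; exact add_le_add h2 hql
          _ ≤ r + R := by rw [hRdef]; linarith
      · rw [hUK]
        exact Set.mem_biUnion (hSX hxS) ⟨k, interior_subset hk, rfl⟩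
    calc volume (closedBall c r ∩ UL) * volume K
        ≤ (∑' (_ : S), volume L) * volume K := mul_le_mul_left h1 _
      _ = ∑' (_ : S), volume L * volume K := ENNReal.tsum_mul_right.symm
      _ = volume L * ∑' (_ : S), volume K := ENNReal.tsum_mul_left
      _ = volume L * volume (⋃ x ∈ S, (fun z => x + z) '' interior K) := by rw [h2]
      _ ≤ volume L * volume (closedBall c (r + R) ∩ UK) :=
          mul_le_mul_right (measure_mono hsub2) _
  -- real-valued helper facts
  have hterm_le_one : ∀ (U : Set (EuclideanSpace ℝ (Fin n))) (c : EuclideanSpace ℝ (Fin n)) (r : ℝ),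
      (volume (closedBall c r ∩ U) / volume (closedBall c r)).toReal ≤ 1 := by
    intro U c r
    have h1 : volume (closedBall c r ∩ U) / volume (closedBall c r)
        ≤ volume (closedBall c r) / volume (closedBall c r) :=
      ENNReal.div_le_div_right (measure_mono Set.inter_subset_left) _
    have h2 : volume (closedBall c r ∩ U) / volume (closedBall c r) ≤ 1 :=
      h1.trans ENNReal.div_self_le_one
    calc (volume (closedBall c r ∩ U) / volume (closedBall c r)).toReal
        ≤ (1 : ENNReal).toReal := ENNReal.toReal_mono (by simp) h2
      _ = 1 := by simp
  have hbdd : ∀ (U : Set (EuclideanSpace ℝ (Fin n))) (r : ℝ), BddAbove (Set.range fun c : EuclideanSpace ℝ (Fin n) =>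
      (volume (closedBall c r ∩ U) / volume (closedBall c r)).toReal) := by
    intro U r
    exact ⟨1, by rintro _ ⟨c, rfl⟩; exact hterm_le_one U c r⟩
  set g : ℝ → ℝ := fun r => ⨆ c : EuclideanSpace ℝ (Fin n),
      (volume (closedBall c r ∩ UK) / volume (closedBall c r)).toReal with hgdef
  have hg1 : ∀ r, g r ≤ 1 := fun r => ciSup_le fun c => hterm_le_one _ _ _
  have hgd : Filter.limsup g atTop ≤ δ := by
    have h := hδ X hXK
    rw [packingUpperDensity] at h
    rw [hgdef, hUK]
    exact h
  have hF0 : ∀ r : ℝ, 0 ≤ ⨆ c : EuclideanSpace ℝ (Fin n),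
      (volume (closedBall c r ∩ UL) / volume (closedBall c r)).toReal :=
    fun r => Real.iSup_nonneg fun c => ENNReal.toReal_nonneg
  -- main estimate, for every ε > 0
  have main : ∀ ε : ℝ, 0 < ε → Filter.limsup (fun r : ℝ => ⨆ c : EuclideanSpace ℝ (Fin n),
      (volume (closedBall c r ∩ UL) / volume (closedBall c r)).toReal) atTop
        ≤ w / v * ((δ + ε) * (1 + ε)) := by
    intro ε hε
    have hBg : Filter.IsBoundedUnder (· ≤ ·) atTop g := isBoundedUnder_of ⟨1, hg1⟩
    have hlt : Filter.limsup g atTop < δ + ε := lt_of_le_of_lt hgd (by linarith)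
    have hev1 : ∀ᶠ r in atTop, g r < δ + ε := Filter.eventually_lt_of_limsup_lt hlt hBg
    have hshift : Filter.Tendsto (fun r : ℝ => r + R) atTop atTop :=
      tendsto_atTop_add_const_right _ R Filter.tendsto_id
    have hev1' : ∀ᶠ r in atTop, g (r + R) < δ + ε := hshift.eventually hev1
    have hβ : Filter.Tendsto (fun r : ℝ => ((r + R) / r) ^ n) atTop (𝓝 1) := by
      have h0 : Filter.Tendsto (fun r : ℝ => 1 + R / r) atTop (𝓝 1) := by
        have := tendsto_const_nhds (x := (1:ℝ)) (f := atTop).add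
          ((tendsto_const_nhds (x := R)).div_atTop Filter.tendsto_id)
        simpa using this
      have h1 : Filter.Tendsto (fun r : ℝ => (1 + R / r) ^ n) atTop (𝓝 (1 ^ n)) := h0.pow n
      rw [one_pow] at h1
      refine Filter.Tendsto.congr' ?_ h1
      filter_upwards [Filter.eventually_gt_atTop 0] with r hr
      have e : (r + R) / r = 1 + R / r := by
        rw [add_div, div_self hr.ne']
      rw [e]
    have hev2 : ∀ᶠ r in atTop, ((r + R) / r) ^ n ≤ 1 + ε :=
      hβ.eventually_le_const (by linarith)
    have hev3 : ∀ᶠ r : ℝ in atTop, (1:ℝ) ≤ r := Filter.eventually_ge_atTop 1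
    refine Filter.limsup_le_of_le (isCoboundedUnder_le_of_le atTop hF0) ?_
    filter_upwards [hev1', hev2, hev3] with r h1 h2 h3
    refine ciSup_le fun c => ?_
    have hrpos : (0:ℝ) < r := lt_of_lt_of_le one_pos h3
    have hrR : (0:ℝ) < r + R := by linarith
    -- ball volumes
    have hc₁fin : volume (ball (0:EuclideanSpace ℝ (Fin n)) 1) ≠ ⊤ := measure_ball_lt_top.ne
    set c₁ := (volume (ball (0:EuclideanSpace ℝ (Fin n)) 1)).toReal with hc₁def
    have hc₁ : 0 < c₁ :=
      ENNReal.toReal_pos (measure_ball_pos volume 0 one_pos).ne' hc₁fin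
    have hsR : (volume (closedBall c r)).toReal = r ^ n * c₁ := by
      rw [Measure.addHaar_closedBall volume c hrpos.le, finrank_euclideanSpace_fin,
        ENNReal.toReal_mul, ENNReal.toReal_ofReal (by positivity)]
    have htR : (volume (closedBall c (r + R))).toReal = (r + R) ^ n * c₁ := by
      rw [Measure.addHaar_closedBall volume c hrR.le, finrank_euclideanSpace_fin,
        ENNReal.toReal_mul, ENNReal.toReal_ofReal (by positivity)]
    have hspos : 0 < (volume (closedBall c r)).toReal := by rw [hsR]; positivity
    have htpos : 0 < (volume (closedBall c (r + R))).toReal := by rw [htR]; positivity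
    -- real form of the key inequality
    have hk := key c r hrpos.le
    have hfinL : volume (closedBall c r ∩ UL) ≠ ⊤ :=
      ((measure_mono Set.inter_subset_left).trans_lt measure_closedBall_lt_top).ne
    have hfinK : volume (closedBall c (r + R) ∩ UK) ≠ ⊤ :=
      ((measure_mono Set.inter_subset_left).trans_lt measure_closedBall_lt_top).ne
    have hk' : (volume (closedBall c r ∩ UL)).toReal * v
        ≤ w * (volume (closedBall c (r + R) ∩ UK)).toReal := by
      have h := ENNReal.toReal_mono (ENNReal.mul_ne_top hWfin hfinK) hk
      rwa [ENNReal.toReal_mul, ENNReal.toReal_mul] at h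
    set a := (volume (closedBall c r ∩ UL)).toReal with ha
    set b := (volume (closedBall c (r + R) ∩ UK)).toReal with hb
    set s := (volume (closedBall c r)).toReal with hs
    set t := (volume (closedBall c (r + R))).toReal with htt
    have ha0 : 0 ≤ a := ENNReal.toReal_nonneg
    have hb0 : 0 ≤ b := ENNReal.toReal_nonneg
    -- bound the K-term by g (r + R)
    have hbK : b / t ≤ g (r + R) := by
      have : (volume (closedBall c (r + R) ∩ UK) / volume (closedBall c (r + R))).toReal
          ≤ g (r + R) := le_ciSup (hbdd UK (r + R)) c
      rwa [ENNReal.toReal_div] at this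
    have hde : b / t ≤ δ + ε := hbK.trans h1.le
    have hde0 : 0 < δ + ε := lt_of_le_of_lt (div_nonneg hb0 htpos.le) (hbK.trans_lt h1)
    -- the ratio of ball volumes
    have hts : t / s ≤ 1 + ε := by
      rw [htR, hsR, mul_div_mul_right _ _ hc₁.ne', ← div_pow]
      exact h2
    -- put everything together
    rw [ENNReal.toReal_div]
    have hwv0 : 0 ≤ w / v := div_nonneg hw0 hVpos.le
    have e1 : a / s ≤ (w * b) / (v * s) := by
      rw [div_le_div_iff₀ hspos (by positivity)]
      calc a * (v * s) = (a * v) * s := by ring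
        _ ≤ (w * b) * s := mul_le_mul_of_nonneg_right hk' hspos.le
    have e2 : (w * b) / (v * s) = (w / v) * (b / t) * (t / s) := by
      field_simp
    calc a / s ≤ (w / v) * (b / t) * (t / s) := e1.trans_eq e2
      _ ≤ (w / v) * (δ + ε) * (1 + ε) := by
          have h4 : (w / v) * (b / t) ≤ (w / v) * (δ + ε) :=
            mul_le_mul_of_nonneg_left hde hwv0
          exact mul_le_mul h4 hts (div_nonneg htpos.le hspos.le)
            (mul_nonneg hwv0 hde0.le)
      _ = w / v * ((δ + ε) * (1 + ε)) := by ring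
  -- pass to the limit ε → 0⁺
  have hlim : Filter.Tendsto (fun ε : ℝ => w / v * ((δ + ε) * (1 + ε))) (𝓝[>] 0)
      (𝓝 (w / v * ((δ + 0) * (1 + 0)))) := by
    refine Filter.Tendsto.mono_left ?_ nhdsWithin_le_nhds
    exact ((continuous_const.mul ((continuous_const.add continuous_id).mul
      (continuous_const.add continuous_id))).tendsto 0)
  have hfin := ge_of_tendsto hlim (by
    filter_upwards [self_mem_nhdsWithin] with ε hε
    exact main ε hε)
  calc Filter.limsup (fun r : ℝ => ⨆ c : EuclideanSpace ℝ (Fin n),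
      (volume (closedBall c r ∩ UL) / volume (closedBall c r)).toReal) atTop
      ≤ w / v * ((δ + 0) * (1 + 0)) := hfin
    _ = δ * w / v := by ring
end

section
/- Let G ⊆ GL₃(ℝ) be the octahedral group 𝖡₃ of all 3×3 signed permutation matrices, acting on ℝ[x₁,x₂,x₃] by (g·p)(x) = p(g⁻¹x). For each integer k ≥ 0, the dimension of the real vector space of G-invariant homogeneous polynomials of degree k equals the number of triples (a,b,c) ∈ ℕ³ with 2a + 4b + 6c = k. -/
open MvPolynomial

/-- The octahedral group `𝖡₃`: the set of all 3×3 signed permutation matrices. -/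
def signedPermMatrices : Set (Matrix (Fin 3) (Fin 3) ℝ) :=
  {A | ∃ (σ : Equiv.Perm (Fin 3)) (ε : Fin 3 → ℝ),
    (∀ i, ε i = 1 ∨ ε i = -1) ∧ A = Matrix.of fun i j => if j = σ i then ε i else 0}

/-- The submodule of `𝖡₃`-invariant polynomials in three variables. -/
noncomputable def invariantSubmodule : Submodule ℝ (MvPolynomial (Fin 3) ℝ) where
  carrier := {p | ∀ A ∈ signedPermMatrices, ∀ x : Fin 3 → ℝ,
    eval (A⁻¹.mulVec x) p = eval x p}
  add_mem' := by
    intro a b ha hb A hA x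
    simp only [map_add]
    rw [ha A hA x, hb A hA x]
  zero_mem' := by
    intro A hA x
    simp
  smul_mem' := by
    intro c a ha A hA x
    simp only [MvPolynomial.smul_eq_C_mul, map_mul, eval_C, ha A hA x]


lemma spm_inv (σ : Equiv.Perm (Fin 3)) (ε : Fin 3 → ℝ) (hε : ∀ i, ε i = 1 ∨ ε i = -1) :
    (Matrix.of fun i j => if j = σ i then ε i else 0 : Matrix (Fin 3) (Fin 3) ℝ)⁻¹
      = (Matrix.of fun i j => if j = σ i then ε i else 0).transpose := by
  apply Matrix.inv_eq_left_inv
  ext i k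
  simp only [Matrix.mul_apply, Matrix.transpose_apply, Matrix.of_apply, Matrix.one_apply]
  rw [Finset.sum_eq_single (σ.symm i)]
  · rcases hε (σ.symm i) with h | h <;>
      by_cases hk : k = i <;>
      simp [Equiv.apply_symm_apply, eq_comm (a := i), hk, h]
  · intro j _ hj
    have : i ≠ σ j := fun h => hj (by simp [h])
    simp [this]
  · simp

lemma mulVec_eq (σ : Equiv.Perm (Fin 3)) (ε : Fin 3 → ℝ) (x : Fin 3 → ℝ) :
    (Matrix.of fun i j => if j = σ i then ε i else 0 : Matrix (Fin 3) (Fin 3) ℝ).transpose.mulVec x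
      = fun i => ε (σ.symm i) * x (σ.symm i) := by
  funext i
  simp only [Matrix.mulVec, Matrix.transpose_apply, Matrix.of_apply, dotProduct]
  rw [Finset.sum_eq_single (σ.symm i)]
  · simp
  · intro j _ hj
    have : i ≠ σ j := fun h => hj (by simp [h])
    simp [this]
  · simp

noncomputable def Phi (τ : Equiv.Perm (Fin 3)) (ε : Fin 3 → ℝ) :
    MvPolynomial (Fin 3) ℝ →ₐ[ℝ] MvPolynomial (Fin 3) ℝ :=
  aeval fun i => C (ε i) * X (τ i)

lemma eval_Phi (τ : Equiv.Perm (Fin 3)) (ε : Fin 3 → ℝ) (x : Fin 3 → ℝ)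
    (p : MvPolynomial (Fin 3) ℝ) :
    eval x (Phi τ ε p) = eval (fun i => ε i * x (τ i)) p := by
  induction p using MvPolynomial.induction_on with
  | C a => simp [Phi]
  | add p q hp hq => simp [map_add, hp, hq]
  | mul_X p i hp =>
      rw [map_mul, map_mul, map_mul, hp]
      congr 1
      simp [Phi]

/-- invariance of evaluations, repackaged -/
lemma inv_eval (p : MvPolynomial (Fin 3) ℝ) (hp : p ∈ invariantSubmodule)
    (τ : Equiv.Perm (Fin 3)) (ε : Fin 3 → ℝ) (hε : ∀ i, ε i = 1 ∨ ε i = -1)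
    (x : Fin 3 → ℝ) :
    eval (fun i => ε i * x (τ i)) p = eval x p := by
  have hε' : ∀ i, (ε ∘ τ.symm.symm) i = 1 ∨ (ε ∘ τ.symm.symm) i = -1 := fun i => hε _
  have h := hp (Matrix.of fun i j => if j = τ.symm i then (ε ∘ τ.symm) i else 0)
    ⟨τ.symm, ε ∘ τ.symm, fun i => hε _, rfl⟩ x
  rw [spm_inv τ.symm (ε ∘ τ.symm) (fun i => hε _), mulVec_eq τ.symm (ε ∘ τ.symm)] at h
  simpa using h

lemma Phi_fixed (p : MvPolynomial (Fin 3) ℝ) (hp : p ∈ invariantSubmodule)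
    (τ : Equiv.Perm (Fin 3)) (ε : Fin 3 → ℝ) (hε : ∀ i, ε i = 1 ∨ ε i = -1) :
    Phi τ ε p = p := by
  apply MvPolynomial.funext
  intro x
  rw [eval_Phi, inv_eval p hp τ ε hε]

lemma Phi_monomial (τ : Equiv.Perm (Fin 3)) (ε : Fin 3 → ℝ) (e : Fin 3 →₀ ℕ) (r : ℝ) :
    Phi τ ε (monomial e r)
      = monomial (Finsupp.mapDomain τ e) (r * e.prod fun i k => ε i ^ k) := by
  rw [Phi, aeval_monomial, monomial_eq, Finsupp.prod_mapDomain_index_inj τ.injective]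
  simp only [Finsupp.prod, mul_pow, ← C_pow, Finset.prod_mul_distrib, ← map_prod, map_mul]
  rw [MvPolynomial.algebraMap_eq]; ring
lemma coeff_Phi (τ : Equiv.Perm (Fin 3)) (ε : Fin 3 → ℝ) (d : Fin 3 →₀ ℕ)
    (p : MvPolynomial (Fin 3) ℝ) :
    coeff (Finsupp.mapDomain τ d) (Phi τ ε p) = (d.prod fun i k => ε i ^ k) * coeff d p := by
  induction p using MvPolynomial.induction_on' with
  | monomial e r =>
      rw [Phi_monomial, coeff_monomial, coeff_monomial]
      by_cases h : e = d
      · simp [h, mul_comm]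
      · rw [if_neg h, if_neg fun hh => h ((Finsupp.mapDomain_injective τ.injective) hh), mul_zero]
  | add p q hp hq => simp only [map_add, coeff_add, hp, hq]; ring

lemma coeff_perm (p : MvPolynomial (Fin 3) ℝ) (hp : p ∈ invariantSubmodule)
    (τ : Equiv.Perm (Fin 3)) (d : Fin 3 →₀ ℕ) :
    coeff (Finsupp.mapDomain τ d) p = coeff d p := by
  conv_lhs => rw [← Phi_fixed p hp τ 1 (fun i => Or.inl rfl)]
  rw [coeff_Phi]
  simp [Finsupp.prod]

lemma coeff_even (p : MvPolynomial (Fin 3) ℝ) (hp : p ∈ invariantSubmodule)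
    (d : Fin 3 →₀ ℕ) (i₀ : Fin 3) (hodd : ¬ Even (d i₀)) : coeff d p = 0 := by
  set ε : Fin 3 → ℝ := fun j => if j = i₀ then -1 else 1 with hε
  have hε1 : ∀ i, ε i = 1 ∨ ε i = -1 := by
    intro i; by_cases h : i = i₀ <;> simp [hε, h]
  have h := coeff_Phi 1 ε d p
  rw [Phi_fixed p hp 1 ε hε1] at h
  have hsupp : i₀ ∈ d.support := Finsupp.mem_support_iff.mpr (by
    intro h0; exact hodd (h0 ▸ Even.zero))
  have hprod : (d.prod fun i k => ε i ^ k) = (-1 : ℝ) ^ (d i₀) := by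
    rw [Finsupp.prod, Finset.prod_eq_single_of_mem i₀ hsupp]
    · simp [hε]
    · intro b _ hb; simp [hε, hb]
  rw [hprod] at h
  have hid : Finsupp.mapDomain (⇑(1 : Equiv.Perm (Fin 3))) d = d := by
    simp [Finsupp.mapDomain_id]
  rw [hid, (Nat.not_even_iff_odd.mp hodd).neg_one_pow] at h
  linarith

noncomputable def Dvec (t : ℕ × ℕ × ℕ) : Fin 3 →₀ ℕ :=
  Finsupp.equivFunOnFinite.symm ![2*(t.1+t.2.1+t.2.2), 2*(t.2.1+t.2.2), 2*t.2.2]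

lemma Dvec_apply (t : ℕ × ℕ × ℕ) (i : Fin 3) :
    Dvec t i = ![2*(t.1+t.2.1+t.2.2), 2*(t.2.1+t.2.2), 2*t.2.2] i := rfl

lemma fin3_degree (d : Fin 3 →₀ ℕ) : d.degree = d 0 + d 1 + d 2 := by
  rw [Finsupp.degree_apply, Finset.sum_subset (Finset.subset_univ d.support)
    (fun i _ h => Finsupp.notMem_support_iff.mp h), Fin.sum_univ_three]

noncomputable def orb (t : ℕ × ℕ × ℕ) : Finset (Fin 3 →₀ ℕ) :=
  Finset.univ.image fun ρ : Equiv.Perm (Fin 3) => Finsupp.mapDomain ρ (Dvec t)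

lemma mem_orb {e : Fin 3 →₀ ℕ} {t : ℕ × ℕ × ℕ} :
    e ∈ orb t ↔ ∃ ρ : Equiv.Perm (Fin 3), e = Finsupp.mapDomain ρ (Dvec t) := by
  simp [orb, eq_comm]

lemma self_mem_orb (t : ℕ × ℕ × ℕ) : Dvec t ∈ orb t :=
  mem_orb.mpr ⟨1, by simp [Finsupp.mapDomain_id]⟩

lemma orb_even {e : Fin 3 →₀ ℕ} {t : ℕ × ℕ × ℕ} (he : e ∈ orb t) (i : Fin 3) :
    Even (e i) := by
  obtain ⟨ρ, rfl⟩ := mem_orb.mp he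
  rw [Finsupp.mapDomain_equiv_apply]
  have : ∀ j : Fin 3, Even (Dvec t j) := by
    intro j
    fin_cases j <;> simp [Dvec_apply, parity_simps]
  exact this _

lemma orb_degree {e : Fin 3 →₀ ℕ} {t : ℕ × ℕ × ℕ} (he : e ∈ orb t) :
    e.degree = 2*t.1 + 4*t.2.1 + 6*t.2.2 := by
  obtain ⟨ρ, rfl⟩ := mem_orb.mp he
  rw [fin3_degree]
  simp only [Finsupp.mapDomain_equiv_apply]
  have hsum : (Dvec t) (ρ.symm 0) + (Dvec t) (ρ.symm 1) + (Dvec t) (ρ.symm 2)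
      = (Dvec t) 0 + (Dvec t) 1 + (Dvec t) 2 := by
    have := Equiv.sum_comp ρ.symm (fun j => (Dvec t) j)
    rw [Fin.sum_univ_three, Fin.sum_univ_three] at this
    exact this
  rw [hsum]
  simp [Dvec_apply]
  ring

noncomputable def mpoly (t : ℕ × ℕ × ℕ) : MvPolynomial (Fin 3) ℝ :=
  ∑ e ∈ orb t, monomial e (1:ℝ)

lemma coeff_mpoly (e : Fin 3 →₀ ℕ) (t : ℕ × ℕ × ℕ) :
    coeff e (mpoly t) = if e ∈ orb t then 1 else 0 := by
  rw [mpoly]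
  rw [MvPolynomial.coeff_sum]
  simp_rw [coeff_monomial]
  exact Finset.sum_ite_eq' (orb t) e (fun _ => 1)

lemma mpoly_homog (t : ℕ × ℕ × ℕ) (k : ℕ) (hk : 2*t.1 + 4*t.2.1 + 6*t.2.2 = k) :
    mpoly t ∈ homogeneousSubmodule (Fin 3) ℝ k := by
  rw [mem_homogeneousSubmodule, mpoly]
  exact MvPolynomial.IsHomogeneous.sum _ _ _
    (fun e he => isHomogeneous_monomial _ ((orb_degree he).trans hk))

lemma orb_map (t : ℕ × ℕ × ℕ) (τ : Equiv.Perm (Fin 3)) :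
    (orb t).image (Finsupp.mapDomain ⇑τ) = orb t := by
  ext e
  simp only [Finset.mem_image, mem_orb]
  constructor
  · rintro ⟨f, ⟨ρ, rfl⟩, rfl⟩
    exact ⟨ρ.trans τ, by rw [← Finsupp.mapDomain_comp]; rfl⟩
  · rintro ⟨ρ, rfl⟩
    exact ⟨Finsupp.mapDomain (ρ.trans τ.symm) (Dvec t), ⟨ρ.trans τ.symm, rfl⟩, by
      rw [← Finsupp.mapDomain_comp]
      congr 1
      funext x
      simp⟩

lemma Phi_mpoly (t : ℕ × ℕ × ℕ) (τ : Equiv.Perm (Fin 3)) (ε : Fin 3 → ℝ)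
    (hε : ∀ i, ε i = 1 ∨ ε i = -1) : Phi τ ε (mpoly t) = mpoly t := by
  rw [mpoly, map_sum]
  have h1 : ∀ e ∈ orb t, Phi τ ε (monomial e 1) = monomial (Finsupp.mapDomain τ e) 1 := by
    intro e he
    rw [Phi_monomial]
    congr 1
    rw [one_mul, Finsupp.prod]
    apply Finset.prod_eq_one
    intro i _
    obtain ⟨u, hu⟩ := orb_even he i
    have h2 : ε i ^ 2 = 1 := by rcases hε i with h | h <;> rw [h] <;> norm_num
    rw [hu, ← two_mul, pow_mul, h2, one_pow]
  rw [Finset.sum_congr rfl h1]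
  apply Finset.sum_nbij' (fun e => Finsupp.mapDomain ⇑τ e) (fun e => Finsupp.mapDomain ⇑τ.symm e)
  · intro e he
    rw [← orb_map t τ]
    exact Finset.mem_image_of_mem _ he
  · intro e he
    rw [← orb_map t τ.symm]
    exact Finset.mem_image_of_mem _ he
  · intro e _
    rw [← Finsupp.mapDomain_comp]
    simp [Finsupp.mapDomain_id]
  · intro e _
    rw [← Finsupp.mapDomain_comp]
    simp [Finsupp.mapDomain_id]
  · intro e _
    rfl

lemma mpoly_invariant (t : ℕ × ℕ × ℕ) : mpoly t ∈ invariantSubmodule := by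
  intro A hA x
  obtain ⟨σ, ε, hε, rfl⟩ := hA
  rw [spm_inv σ ε hε, mulVec_eq]
  conv_rhs => rw [← Phi_mpoly t σ.symm (ε ∘ σ.symm) (fun i => hε _)]
  rw [eval_Phi]
  rfl

lemma Dvec_mono (t : ℕ × ℕ × ℕ) : ∀ j : Fin 3, Dvec t j ≤ Dvec t 0 ∧ Dvec t 2 ≤ Dvec t j := by
  intro j
  fin_cases j <;> simp [Dvec_apply] <;> omega

lemma orb_unique {e : Fin 3 →₀ ℕ} {t t' : ℕ × ℕ × ℕ} (h : e ∈ orb t) (h' : e ∈ orb t') :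
    t = t' := by
  obtain ⟨ρ, rfl⟩ := mem_orb.mp h
  obtain ⟨ρ', he'⟩ := mem_orb.mp h'
  set π : Equiv.Perm (Fin 3) := ρ'.trans ρ.symm with hπ
  have key : ∀ j, Dvec t' j = Dvec t (π j) := by
    intro j
    have := congrFun (congrArg (fun f : Fin 3 →₀ ℕ => (f : Fin 3 → ℕ)) he') (ρ' j)
    simp only [Finsupp.mapDomain_equiv_apply] at this
    simpa [hπ] using this.symm
  have key' : ∀ j, Dvec t j = Dvec t' (π.symm j) := by
    intro j
    rw [key (π.symm j), Equiv.apply_symm_apply]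
  have h0 : Dvec t' 0 = Dvec t 0 :=
    le_antisymm ((key 0).le.trans (Dvec_mono t (π 0)).1)
      ((key' 0).le.trans (Dvec_mono t' (π.symm 0)).1)
  have h2 : Dvec t' 2 = Dvec t 2 := by
    have hle : Dvec t 2 ≤ Dvec t' 2 := by
      rw [key 2]; exact (Dvec_mono t (π 2)).2
    have hge : Dvec t' 2 ≤ Dvec t 2 := by
      rw [key' 2]; exact (Dvec_mono t' (π.symm 2)).2
    omega
  have hsum : Dvec t' 0 + Dvec t' 1 + Dvec t' 2 = Dvec t 0 + Dvec t 1 + Dvec t 2 := by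
    have := Equiv.sum_comp π (fun j => Dvec t j)
    rw [Fin.sum_univ_three, Fin.sum_univ_three] at this
    rw [key 0, key 1, key 2, this]
  rcases t with ⟨a, b, c⟩
  rcases t' with ⟨a', b', c'⟩
  simp only [Dvec_apply] at h0 h2 hsum
  simp only [Matrix.cons_val_zero, Matrix.cons_val_one, Matrix.head_cons,
    Matrix.cons_val_two, Matrix.tail_cons] at h0 h2 hsum
  simp only [Prod.mk.injEq]
  omega

def p3 (v w : Fin 3 → Fin 3) (h1 : ∀ x, w (v x) = x) (h2 : ∀ x, v (w x) = x) :
    Equiv.Perm (Fin 3) := ⟨v, w, h1, h2⟩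

lemma exists_sorted (e : Fin 3 → ℕ) :
    ∃ ρ : Equiv.Perm (Fin 3), e (ρ 1) ≤ e (ρ 0) ∧ e (ρ 2) ≤ e (ρ 1) := by
  rcases le_total (e 0) (e 1) with h01 | h01
  · rcases le_total (e 0) (e 2) with h02 | h02
    · rcases le_total (e 1) (e 2) with h12 | h12
      · refine ⟨p3 ![2,1,0] ![2,1,0] (by decide) (by decide), ?_, ?_⟩ <;> simp [p3] <;> omega
      · refine ⟨p3 ![1,2,0] ![2,0,1] (by decide) (by decide), ?_, ?_⟩ <;> simp [p3] <;> omega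
    · refine ⟨p3 ![1,0,2] ![1,0,2] (by decide) (by decide), ?_, ?_⟩ <;> simp [p3] <;> omega
  · rcases le_total (e 0) (e 2) with h02 | h02
    · refine ⟨p3 ![2,0,1] ![1,2,0] (by decide) (by decide), ?_, ?_⟩ <;> simp [p3] <;> omega
    · rcases le_total (e 1) (e 2) with h12 | h12
      · refine ⟨p3 ![0,2,1] ![0,2,1] (by decide) (by decide), ?_, ?_⟩ <;> simp [p3] <;> omega
      · refine ⟨p3 ![0,1,2] ![0,1,2] (by decide) (by decide), ?_, ?_⟩ <;> simp [p3] <;> omega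

lemma exists_orb (e : Fin 3 →₀ ℕ) (heven : ∀ i, Even (e i)) :
    ∃ t : ℕ × ℕ × ℕ, e ∈ orb t := by
  obtain ⟨ρ, hρ1, hρ2⟩ := exists_sorted (fun i => e i)
  obtain ⟨x0, hx0⟩ := heven (ρ 0)
  obtain ⟨x1, hx1⟩ := heven (ρ 1)
  obtain ⟨x2, hx2⟩ := heven (ρ 2)
  refine ⟨((e (ρ 0) - e (ρ 1))/2, (e (ρ 1) - e (ρ 2))/2, e (ρ 2)/2), ?_⟩
  apply mem_orb.mpr ⟨ρ, ?_⟩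
  have key : ∀ j, Dvec ((e (ρ 0) - e (ρ 1))/2, (e (ρ 1) - e (ρ 2))/2, e (ρ 2)/2) j
      = e (ρ j) := by
    intro j
    fin_cases j <;> simp [Dvec_apply] <;> omega
  ext i
  rw [Finsupp.mapDomain_equiv_apply, key]
  rw [Equiv.apply_symm_apply]

noncomputable instance fintypeT (k : ℕ) :
    Fintype {t : ℕ × ℕ × ℕ // 2 * t.1 + 4 * t.2.1 + 6 * t.2.2 = k} :=
  Fintype.subtype ((Finset.range (k+1) ×ˢ Finset.range (k+1) ×ˢ Finset.range (k+1)).filter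
    fun t => 2 * t.1 + 4 * t.2.1 + 6 * t.2.2 = k) (by
      intro t
      simp only [Finset.mem_filter, Finset.mem_product, Finset.mem_range]
      omega)

lemma repr_eq (k : ℕ) (p : MvPolynomial (Fin 3) ℝ) (hp : p ∈ invariantSubmodule)
    (hh : p.IsHomogeneous k) :
    p = ∑ t : {t : ℕ × ℕ × ℕ // 2 * t.1 + 4 * t.2.1 + 6 * t.2.2 = k},
        coeff (Dvec t.1) p • mpoly t.1 := by
  apply MvPolynomial.ext
  intro e
  rw [MvPolynomial.coeff_sum]
  simp_rw [MvPolynomial.coeff_smul, coeff_mpoly, smul_eq_mul, mul_ite, mul_one, mul_zero]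
  by_cases hex : ∃ t : {t : ℕ × ℕ × ℕ // 2 * t.1 + 4 * t.2.1 + 6 * t.2.2 = k}, e ∈ orb t.1
  · obtain ⟨t₀, ht₀⟩ := hex
    rw [Finset.sum_eq_single t₀]
    · rw [if_pos ht₀]
      obtain ⟨ρ, rfl⟩ := mem_orb.mp ht₀
      exact coeff_perm p hp ρ (Dvec t₀.1)
    · intro t _ hne
      rw [if_neg]
      intro hmem
      exact hne (Subtype.ext (orb_unique hmem ht₀))
    · intro h; exact absurd (Finset.mem_univ t₀) h
  · rw [Finset.sum_eq_zero (fun t _ => if_neg (fun hmem => hex ⟨t, hmem⟩))]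
    by_contra h0
    have heven : ∀ i, Even (e i) := by
      intro i
      by_contra hodd
      exact h0 (coeff_even p hp e i hodd)
    obtain ⟨t, ht⟩ := exists_orb e heven
    have hdeg : e.degree = 2*t.1 + 4*t.2.1 + 6*t.2.2 := orb_degree ht
    have hdegk : e.degree = k := by
      rw [Finsupp.degree_eq_weight_one]
      exact hh h0
    exact hex ⟨⟨t, by omega⟩, ht⟩

lemma indep (k : ℕ) :
    LinearIndependent ℝ
      (fun t : {t : ℕ × ℕ × ℕ // 2 * t.1 + 4 * t.2.1 + 6 * t.2.2 = k} => mpoly t.1) := by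
  rw [Fintype.linearIndependent_iff]
  intro g hg t
  have h := congrArg (coeff (Dvec t.1)) hg
  rw [MvPolynomial.coeff_sum] at h
  simp_rw [MvPolynomial.coeff_smul, coeff_mpoly, smul_eq_mul, mul_ite, mul_one, mul_zero] at h
  rw [Finset.sum_eq_single t] at h
  · rw [if_pos (self_mem_orb t.1)] at h
    simpa using h
  · intro t' _ hne
    rw [if_neg]
    intro hmem
    exact hne (Subtype.ext (orb_unique hmem (self_mem_orb t.1)))
  · intro h'; exact absurd (Finset.mem_univ t) h'

lemma span_eq (k : ℕ) :
    Submodule.span ℝ (Set.range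
        (fun t : {t : ℕ × ℕ × ℕ // 2 * t.1 + 4 * t.2.1 + 6 * t.2.2 = k} => mpoly t.1))
      = invariantSubmodule ⊓ homogeneousSubmodule (Fin 3) ℝ k := by
  apply le_antisymm
  · rw [Submodule.span_le]
    rintro _ ⟨t, rfl⟩
    exact ⟨mpoly_invariant t.1, mpoly_homog t.1 k t.2⟩
  · intro p hp
    obtain ⟨hp1, hp2⟩ := hp
    rw [repr_eq k p hp1 ((mem_homogeneousSubmodule _ _).mp hp2)]
    exact Submodule.sum_mem _ fun t _ => Submodule.smul_mem _ _ (Submodule.subset_span ⟨t, rfl⟩)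


/-- Molien series computation: the dimension of the space of `𝖡₃`-invariant homogeneous
polynomials of degree `k` equals the number of triples `(a,b,c) ∈ ℕ³` with
`2a + 4b + 6c = k`. -/
theorem b3_invariant_dimension (k : ℕ) :
    Module.finrank ℝ
        ↥(invariantSubmodule ⊓ MvPolynomial.homogeneousSubmodule (Fin 3) ℝ k) =
      Nat.card {t : ℕ × ℕ × ℕ // 2 * t.1 + 4 * t.2.1 + 6 * t.2.2 = k} := by
  rw [← span_eq k]
  exact Module.finrank_eq_nat_card_basis (Module.Basis.span (indep k))
end

section
/- Let S be an n×n symmetric matrix whose entries are polynomials in ℝ[x₁,…,x_m]. Then S is a sum-of-squares matrix polynomial (i.e., there exists a matrix L with polynomial entries such that S = L Lᵀ) if and only if the polynomial yᵀ S(x) y ∈ ℝ[x₁,…,x_m, y₁,…,y_n] is a sum of squares of polynomials. -/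
open MvPolynomial

private lemma sos_eq_zero {m N : ℕ} (p : Fin N → MvPolynomial (Fin m) ℝ)
    (h : ∑ k, p k ^ 2 = 0) (k : Fin N) : p k = 0 := by
  apply MvPolynomial.funext
  intro a
  have h1 : ∑ k, (eval a (p k)) ^ 2 = 0 := by
    have := congrArg (eval a) h
    simpa using this
  rw [Finset.sum_eq_zero_iff_of_nonneg (fun k _ => sq_nonneg _)] at h1
  have := h1 k (Finset.mem_univ k)
  simpa [pow_eq_zero_iff] using this

private lemma single_of_degree_one {n : ℕ} (d : Fin n →₀ ℕ) (hd : d.degree = 1) :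
    ∃ i, d = Finsupp.single i 1 := by
  have hd0 : d ≠ 0 := by
    intro h; rw [h] at hd; simp at hd
  obtain ⟨i, hi⟩ := Finsupp.support_nonempty_iff.mpr hd0
  have hle := Finsupp.le_degree i d
  have hdi : d i = 1 :=
    le_antisymm (hd ▸ hle) (Nat.one_le_iff_ne_zero.mpr (Finsupp.mem_support_iff.mp hi))
  refine ⟨i, Finsupp.ext fun j => ?_⟩
  by_cases hji : j = i
  · subst hji; simp [hdi]
  · rw [Finsupp.single_apply, if_neg (fun h => hji h.symm)]
    by_contra hdj
    have hj : j ∈ d.support := Finsupp.mem_support_iff.mpr hdj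
    have hsub : ({i, j} : Finset (Fin n)) ⊆ d.support := by
      intro t ht
      rcases Finset.mem_insert.mp ht with rfl | ht
      · exact hi
      · rw [Finset.mem_singleton] at ht; subst ht; exact hj
    have h2 : d i + d j ≤ d.degree := by
      rw [← Finset.sum_pair (fun h => hji h.symm : i ≠ j)]
      exact Finset.sum_le_sum_of_subset hsub
    omega

private lemma hom_one_rep {n : ℕ} {A : Type*} [CommSemiring A] (p : MvPolynomial (Fin n) A)
    (hp : p.IsHomogeneous 1) :
    p = ∑ i, C (coeff (Finsupp.single i 1) p) * X i := by
  have hds : ∀ i : Fin n, (Finsupp.single i 1).degree = 1 := by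
    intro i; simp [Finsupp.degree_single]
  ext d
  rw [coeff_sum]
  simp_rw [coeff_C_mul, coeff_X']
  by_cases hdeg : d.degree = 1
  · obtain ⟨i, rfl⟩ := single_of_degree_one d hdeg
    rw [Finset.sum_eq_single i]
    · simp
    · intro b _ hbi
      rw [if_neg, mul_zero]
      intro h
      exact hbi (Finsupp.single_left_injective one_ne_zero h)
    · simp
  · rw [hp.coeff_eq_zero hdeg]
    symm
    apply Finset.sum_eq_zero
    intro i _
    rw [if_neg, mul_zero]
    intro h
    exact hdeg (h ▸ hds i)

private lemma sq_expand {n N : ℕ} {A : Type*} [CommRing A] (L : Matrix (Fin n) (Fin N) A) :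
    ∑ k, (∑ i, (C (L i k) : MvPolynomial (Fin n) A) * X i) ^ 2
      = ∑ i, ∑ j, (C ((L * L.transpose) i j) : MvPolynomial (Fin n) A) * X i * X j := by
  have h1 : ∀ k, (∑ i, (C (L i k) : MvPolynomial (Fin n) A) * X i) ^ 2
      = ∑ i, ∑ j, (C (L i k * L j k) : MvPolynomial (Fin n) A) * X i * X j := by
    intro k
    rw [sq, Finset.sum_mul_sum]
    refine Finset.sum_congr rfl fun i _ => Finset.sum_congr rfl fun j _ => ?_
    rw [map_mul]; ring
  rw [Finset.sum_congr rfl fun k _ => h1 k, Finset.sum_comm]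
  refine Finset.sum_congr rfl fun i _ => ?_
  rw [Finset.sum_comm]
  refine Finset.sum_congr rfl fun j _ => ?_
  rw [Matrix.mul_apply]
  simp only [Matrix.transpose_apply, map_sum, Finset.sum_mul]

private lemma single_add_single_eq {n : ℕ} (i j i' j' : Fin n) :
    Finsupp.single i' 1 + Finsupp.single j' 1 = Finsupp.single i 1 + Finsupp.single j 1 ↔
      (i' = i ∧ j' = j) ∨ (i' = j ∧ j' = i) := by
  constructor
  · intro h
    by_cases h1 : i' = i
    · subst h1
      have := add_left_cancel h
      exact Or.inl ⟨rfl, Finsupp.single_left_injective one_ne_zero this⟩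
    · by_cases h2 : j' = i
      · subst h2
        rw [add_comm (Finsupp.single i' 1)] at h
        have := add_left_cancel h
        exact Or.inr ⟨Finsupp.single_left_injective one_ne_zero this, rfl⟩
      · exfalso
        have hi := DFunLike.congr_fun h i
        simp only [Finsupp.add_apply, Finsupp.single_apply] at hi
        split_ifs at hi
  · rintro (⟨rfl, rfl⟩ | ⟨rfl, rfl⟩)
    · rfl
    · exact add_comm _ _

private lemma coeff_quad {n : ℕ} {A : Type*} [CommRing A] (T : Matrix (Fin n) (Fin n) A)
    (i j : Fin n) :
    coeff (Finsupp.single i 1 + Finsupp.single j 1)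
      (∑ i', ∑ j', (C (T i' j') : MvPolynomial (Fin n) A) * X i' * X j')
      = if i = j then T i i else T i j + T j i := by
  have key : ∀ i' j' : Fin n, (C (T i' j') : MvPolynomial (Fin n) A) * X i' * X j'
      = monomial (Finsupp.single i' 1 + Finsupp.single j' 1) (T i' j') := by
    intro i' j'
    have hx : ∀ s : Fin n, (X s : MvPolynomial (Fin n) A) = monomial (Finsupp.single s 1) 1 := by
      intro s; rfl
    rw [hx, hx, C_mul_monomial, monomial_mul, mul_one, mul_one]
  simp_rw [key, coeff_sum, coeff_monomial, single_add_single_eq i j]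
  by_cases hij : i = j
  · subst hij
    rw [if_pos rfl]
    simp [ite_and]
  · rw [if_neg hij]
    have hsplit : ∀ i' j' : Fin n,
        (if (i' = i ∧ j' = j) ∨ (i' = j ∧ j' = i) then T i' j' else 0)
        = (if i' = i ∧ j' = j then T i' j' else 0) + (if i' = j ∧ j' = i then T i' j' else 0) := by
      intro i' j'
      by_cases c1 : i' = i ∧ j' = j
      · obtain ⟨rfl, rfl⟩ := c1
        simp [hij, Ne.symm hij]
      · by_cases c2 : i' = j ∧ j' = i
        · obtain ⟨rfl, rfl⟩ := c2
          simp [c1]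
        · simp [c1, c2]
    simp_rw [hsplit, Finset.sum_add_distrib]
    simp [ite_and]

private lemma degree_add' {n : ℕ} (d e : Fin n →₀ ℕ) : (d + e).degree = d.degree + e.degree := by
  simp [Finsupp.degree_eq_weight_one, map_add]

private lemma support_mul_le {n : ℕ} {A : Type*} [CommRing A] {p q : MvPolynomial (Fin n) A}
    {a b : ℕ} (hp : ∀ d ∈ p.support, a ≤ d.degree) (hq : ∀ d ∈ q.support, b ≤ d.degree) :
    ∀ d ∈ (p * q).support, a + b ≤ d.degree := by
  classical
  intro d hd
  have := MvPolynomial.support_mul p q hd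
  rw [Finset.mem_add] at this
  obtain ⟨d1, hd1, d2, hd2, rfl⟩ := this
  rw [degree_add']
  exact add_le_add (hp d1 hd1) (hq d2 hd2)

private lemma hc_two_zero {n : ℕ} {A : Type*} [CommRing A] {p : MvPolynomial (Fin n) A}
    (hp : ∀ d ∈ p.support, 3 ≤ d.degree) : homogeneousComponent 2 p = 0 := by
  apply homogeneousComponent_eq_zero'
  intro d hd
  have := hp d hd
  omega

/-- A symmetric matrix `S` of polynomials is a sum-of-squares matrix polynomial
(`S = L Lᵀ` for some polynomial matrix `L`) if and only if the polynomial `yᵀ S(x) y`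
in the variables `x₁,…,x_m, y₁,…,y_n` is a sum of squares. -/
theorem sos_matrix_iff_sos_polynomial {m n : ℕ}
    (S : Matrix (Fin n) (Fin n) (MvPolynomial (Fin m) ℝ)) (hS : S.IsSymm) :
    (∃ (k : ℕ) (L : Matrix (Fin n) (Fin k) (MvPolynomial (Fin m) ℝ)), S = L * L.transpose) ↔
    (∃ (N : ℕ) (q : Fin N → MvPolynomial (Fin m ⊕ Fin n) ℝ),
      (∑ i : Fin n, ∑ j : Fin n,
        X (Sum.inr i) * rename Sum.inl (S i j) * X (Sum.inr j)) = ∑ i, q i ^ 2) := by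
  classical
  let E : MvPolynomial (Fin m ⊕ Fin n) ℝ ≃ₐ[ℝ] MvPolynomial (Fin n) (MvPolynomial (Fin m) ℝ) :=
    (renameEquiv ℝ (Equiv.sumComm (Fin m) (Fin n))).trans (sumAlgEquiv ℝ (Fin n) (Fin m))
  have hEX : ∀ i : Fin n, E (X (Sum.inr i)) = X i := by
    intro i
    simp [E, sumAlgEquiv_X_inl]
  have hEC : ∀ p : MvPolynomial (Fin m) ℝ, E (rename Sum.inl p) = C p := by
    intro p
    have h1 : (rename (Equiv.sumComm (Fin m) (Fin n))) (rename Sum.inl p)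
        = rename Sum.inr p := by
      rw [rename_rename]; rfl
    have h2 := congrArg (fun f => f p)
      (sumAlgEquiv_comp_rename_inr ℝ (Fin n) (Fin m))
    simp only [AlgHom.comp_apply, AlgEquiv.toAlgHom_eq_coe, AlgHom.coe_coe,
      IsScalarTower.coe_toAlgHom'] at h2
    have h3 : E (rename Sum.inl p) = (sumAlgEquiv ℝ (Fin n) (Fin m)) (rename Sum.inr p) := by
      simp only [E, AlgEquiv.trans_apply, renameEquiv_apply, h1]
    rw [h3, ← algebraMap_eq]; exact h2
  have hEP : E (∑ i : Fin n, ∑ j : Fin n,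
        X (Sum.inr i) * rename Sum.inl (S i j) * X (Sum.inr j))
      = ∑ i, ∑ j, (C (S i j) : MvPolynomial (Fin n) (MvPolynomial (Fin m) ℝ)) * X i * X j := by
    rw [map_sum]
    refine Finset.sum_congr rfl fun i _ => ?_
    rw [map_sum]
    refine Finset.sum_congr rfl fun j _ => ?_
    rw [map_mul, map_mul, hEX, hEX, hEC]
    ring
  have hiff : (∃ (N : ℕ) (q : Fin N → MvPolynomial (Fin m ⊕ Fin n) ℝ),
      (∑ i : Fin n, ∑ j : Fin n,
        X (Sum.inr i) * rename Sum.inl (S i j) * X (Sum.inr j)) = ∑ i, q i ^ 2)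
      ↔ (∃ (N : ℕ) (q : Fin N → MvPolynomial (Fin n) (MvPolynomial (Fin m) ℝ)),
          (∑ i, ∑ j, (C (S i j) : MvPolynomial (Fin n) (MvPolynomial (Fin m) ℝ)) * X i * X j)
            = ∑ k, q k ^ 2) := by
    constructor
    · rintro ⟨N, q, hq⟩
      refine ⟨N, fun k => E (q k), ?_⟩
      rw [← hEP, hq, map_sum]
      simp [map_pow]
    · rintro ⟨N, q, hq⟩
      refine ⟨N, fun k => E.symm (q k), ?_⟩
      apply E.injective
      rw [hEP, hq, map_sum]
      simp [map_pow]
  rw [hiff]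
  constructor
  · rintro ⟨k, L, rfl⟩
    exact ⟨k, fun t => ∑ i, C (L i t) * X i, (sq_expand L).symm⟩
  · rintro ⟨N, q, hQ⟩
    set r : Fin N → MvPolynomial (Fin n) (MvPolynomial (Fin m) ℝ) :=
      fun k => homogeneousComponent 1 (q k) with hrdef
    have hc0 : ∀ k, constantCoeff (q k) = 0 := by
      have h0 : ∑ k, (constantCoeff (q k)) ^ 2 = 0 := by
        have h := congrArg constantCoeff hQ
        simp only [map_sum, map_mul, map_pow, constantCoeff_C, constantCoeff_X, mul_zero,
          zero_mul, Finset.sum_const_zero] at h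
        exact h.symm
      intro k
      exact sos_eq_zero _ h0 k
    have hc0' : ∀ k, coeff 0 (q k) = 0 := hc0
    have hrhom : ∀ k, (r k).IsHomogeneous 1 := fun k => homogeneousComponent_isHomogeneous 1 (q k)
    have hrsupp : ∀ k, ∀ d ∈ (r k).support, 1 ≤ d.degree := by
      intro k d hd
      have hne := MvPolynomial.mem_support_iff.mp hd
      by_contra hlt
      push_neg at hlt
      exact hne ((hrhom k).coeff_eq_zero (by omega))
    have hssupp : ∀ k, ∀ d ∈ (q k - r k).support, 2 ≤ d.degree := by
      intro k d hd
      have hne := MvPolynomial.mem_support_iff.mp hd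
      by_contra hlt
      push_neg at hlt
      have hcase : d.degree = 0 ∨ d.degree = 1 := by omega
      rcases hcase with h0 | h1
      · have hd0 : d = 0 := (Finsupp.degree_eq_zero_iff d).mp h0
        subst hd0
        apply hne
        rw [coeff_sub, hrdef, coeff_homogeneousComponent]
        simp [hc0' k]
      · apply hne
        rw [coeff_sub, hrdef, coeff_homogeneousComponent, if_pos h1, sub_self]
    have hcomp : ∀ k, homogeneousComponent 2 (q k ^ 2) = r k ^ 2 := by
      intro k
      have hsq : q k ^ 2 = r k ^ 2 + (r k * (q k - r k)
          + ((q k - r k) * r k + (q k - r k) * (q k - r k))) := by ring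
      have hmem : r k ^ 2 ∈ homogeneousSubmodule (Fin n) (MvPolynomial (Fin m) ℝ) 2 := by
        rw [mem_homogeneousSubmodule, sq]
        exact (hrhom k).mul (hrhom k)
      rw [hsq, map_add, map_add, map_add,
        hc_two_zero (support_mul_le (hrsupp k) (hssupp k)),
        hc_two_zero (support_mul_le (hssupp k) (hrsupp k)),
        hc_two_zero (p := (q k - r k) * (q k - r k)) (fun d hd => by
          have := support_mul_le (hssupp k) (hssupp k) d hd; omega),
        homogeneousComponent_of_mem hmem, if_pos rfl]
      ring
    have hQhom : (∑ i, ∑ j, (C (S i j) : MvPolynomial (Fin n) (MvPolynomial (Fin m) ℝ))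
        * X i * X j) ∈ homogeneousSubmodule (Fin n) (MvPolynomial (Fin m) ℝ) 2 := by
      rw [mem_homogeneousSubmodule]
      apply IsHomogeneous.sum
      intro i _
      apply IsHomogeneous.sum
      intro j _
      have := ((isHomogeneous_C (Fin n) (S i j)).mul (isHomogeneous_X _ i)).mul
        (isHomogeneous_X _ j)
      simpa using this
    have hQ2 : (∑ i, ∑ j, (C (S i j) : MvPolynomial (Fin n) (MvPolynomial (Fin m) ℝ))
        * X i * X j) = ∑ k, r k ^ 2 := by
      have h := congrArg (homogeneousComponent 2) hQ
      rw [homogeneousComponent_of_mem hQhom, if_pos rfl, map_sum] at h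
      rw [h]
      exact Finset.sum_congr rfl fun k _ => hcomp k
    refine ⟨N, Matrix.of (fun i k => coeff (Finsupp.single i 1) (q k)), ?_⟩
    set L : Matrix (Fin n) (Fin N) (MvPolynomial (Fin m) ℝ) :=
      Matrix.of (fun i k => coeff (Finsupp.single i 1) (q k)) with hLdef
    have hrrep : ∀ k, r k = ∑ i, C (L i k) * X i := by
      intro k
      rw [hom_one_rep (r k) (hrhom k)]
      refine Finset.sum_congr rfl fun i _ => ?_
      congr 1
      rw [hrdef, coeff_homogeneousComponent,
        if_pos (by simp [Finsupp.degree_single])]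
      rfl
    have hQ3 : (∑ i, ∑ j, (C (S i j) : MvPolynomial (Fin n) (MvPolynomial (Fin m) ℝ))
        * X i * X j) = ∑ i, ∑ j,
          (C ((L * L.transpose) i j) : MvPolynomial (Fin n) (MvPolynomial (Fin m) ℝ))
            * X i * X j := by
      rw [hQ2, Finset.sum_congr rfl fun k _ => by rw [hrrep k], sq_expand]
    refine Matrix.ext fun i j => ?_
    have h1 := congrArg (coeff (Finsupp.single i 1 + Finsupp.single j 1)) hQ3
    rw [coeff_quad, coeff_quad] at h1
    by_cases hij : i = j
    · subst hij
      rw [if_pos rfl, if_pos rfl] at h1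
      exact h1
    · rw [if_neg hij, if_neg hij] at h1
      have hSji : S j i = S i j := hS.apply i j
      have hMji : (L * L.transpose) j i = (L * L.transpose) i j := by
        rw [Matrix.mul_apply, Matrix.mul_apply]
        exact Finset.sum_congr rfl fun k _ => by
          rw [Matrix.transpose_apply, Matrix.transpose_apply, mul_comm]
      rw [hSji, hMji] at h1
      have h2 : (2 : MvPolynomial (Fin m) ℝ) * S i j
          = 2 * (L * L.transpose) i j := by
        rw [two_mul, two_mul, h1]
      exact mul_left_cancel₀ (by norm_num : (2 : MvPolynomial (Fin m) ℝ) ≠ 0) h2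
end
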